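/- Characterisation of centres of spin relative to the Newton–Wigner position (algebraic core): Let P ∈ ℝ⁴ be future-directed timelike with mc := √(−η(P,P)) and u ∈ ℝ⁴ future-directed unit timelike. For D ∈ ℝ⁴, the covector ι_{u+P/(mc)}(D^♭ ∧ P^♭), whose components are (η(D,u) + η(D,P)/(mc)) P_μ − (η(P,u) − mc) D_μ, lies in the span of u^♭ − P^♭/(mc) if and only if D ∈ span{u, P}. (Note η(P,u) − mc < 0 automatically, since η(u,P) ≤ −mc.) -/

import Mathlib

noncomputable section

open scoped BigOperators

/-- The Minkowski bilinear form on `ℝ⁴`, signature `(-+++)`. -/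
def mink (x y : Fin 4 → ℝ) : ℝ := -(x 0 * y 0) + x 1 * y 1 + x 2 * y 2 + x 3 * y 3

/-- Lowering (equivalently raising) an index with `η = diag(-1,1,1,1)`. -/
def low (v : Fin 4 → ℝ) : Fin 4 → ℝ := fun μ => if μ = 0 then -(v μ) else v μ

/-- `v` is future-directed timelike. -/
def FDTimelike (v : Fin 4 → ℝ) : Prop := mink v v < 0 ∧ 0 < v 0

/-- `v` is future-directed unit timelike. -/
def FDUnitTimelike (v : Fin 4 → ℝ) : Prop := mink v v = -1 ∧ 0 < v 0

/-- `mc := √(−η(P,P))`. -/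
def mcOf (P : Fin 4 → ℝ) : ℝ := Real.sqrt (-(mink P P))

/-- The spin tensor `S_{μν}(x) = J_{μν} − x_μ P_ν + x_ν P_μ` about the point `x`. -/
def spinTensor (J : Fin 4 → Fin 4 → ℝ) (P x : Fin 4 → ℝ) : Fin 4 → Fin 4 → ℝ :=
  fun μ ν => J μ ν - low x μ * low P ν + low x ν * low P μ

/-- The spin supplementary condition `S_{μν}(x) f^ν = 0` with respect to `f`. -/
def SSC (J : Fin 4 → Fin 4 → ℝ) (P x f : Fin 4 → ℝ) : Prop :=
  ∀ μ, ∑ ν, spinTensor J P x μ ν * f ν = 0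

/-- Lowered components of the Newton–Wigner position observable. -/
def nwLow (J : Fin 4 → Fin 4 → ℝ) (P u : Fin 4 → ℝ) (τ : ℝ) : Fin 4 → ℝ :=
  fun μ =>
    -(∑ ρ, J μ ρ * (u ρ + P ρ / mcOf P)) / (mcOf P - mink u P)
    + τ * low P μ / (-(mink u P))
    - ((∑ l, ∑ ρ, J l ρ * u l * P ρ) / (mcOf P * (mcOf P - mink u P)))
        * low P μ / (-(mink u P))

/-- The Newton–Wigner position observable (as a point of `ℝ⁴`). -/
def nw (J : Fin 4 → Fin 4 → ℝ) (P u : Fin 4 → ℝ) (τ : ℝ) : Fin 4 → ℝ :=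
  low (nwLow J P u τ)

/-- **Characterisation of centres of spin relative to the Newton–Wigner position (algebraic
core)**: the covector `ι_{u+P/(mc)}(D^♭∧P^♭)`, with components
`(η(D,u)+η(D,P)/(mc))P_μ − (η(P,u)−mc)D_μ`, lies in the span of `u^♭ − P^♭/(mc)` iff
`D ∈ span{u,P}`. -/
theorem interior_wedge_in_span_iff_mem_span
    (P : Fin 4 → ℝ) (hP : FDTimelike P)
    (u : Fin 4 → ℝ) (hu : FDUnitTimelike u)
    (D : Fin 4 → ℝ) :
    ((fun μ => (mink D u + mink D P / mcOf P) * low P μ - (mink P u - mcOf P) * low D μ)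
        ∈ Submodule.span ℝ ({fun μ => low u μ - low P μ / mcOf P} : Set (Fin 4 → ℝ)))
    ↔ D ∈ Submodule.span ℝ ({u, P} : Set (Fin 4 → ℝ)) := by
  obtain ⟨hPt, hP0⟩ := hP
  obtain ⟨huu, hu0⟩ := hu
  have hm : 0 < mcOf P := Real.sqrt_pos.mpr (by linarith)
  have hm2 : mcOf P ^ 2 = -(mink P P) := Real.sq_sqrt (by linarith)
  have hm0 : mcOf P ≠ 0 := ne_of_gt hm
  have hPu : mink P u < 0 := by
    simp only [mink] at huu hPt ⊢
    nlinarith [sq_nonneg (u 1 * P 2 - u 2 * P 1), sq_nonneg (u 1 * P 3 - u 3 * P 1),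
      sq_nonneg (u 2 * P 3 - u 3 * P 2), mul_pos hu0 hP0,
      sq_nonneg (u 1 * P 1 + u 2 * P 2 + u 3 * P 3 + u 0 * P 0)]
  have hβ : mink P u - mcOf P ≠ 0 := by nlinarith
  constructor
  · intro h
    rw [Submodule.mem_span_singleton] at h
    obtain ⟨c, hc⟩ := h
    rw [Submodule.mem_span_pair]
    refine ⟨-c / (mink P u - mcOf P),
      (mink D u + mink D P / mcOf P + c / mcOf P) / (mink P u - mcOf P), ?_⟩
    funext μ
    have hcμ := congrFun hc μ
    simp only [Pi.smul_apply, smul_eq_mul, Pi.add_apply] at hcμ ⊢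
    rcases eq_or_ne μ 0 with h0 | h0
    · subst h0
      simp only [low, if_pos rfl, ↓reduceIte] at hcμ ⊢
      field_simp at hcμ ⊢
      linear_combination hcμ
    · simp only [low, if_neg h0] at hcμ ⊢
      field_simp at hcμ ⊢
      linear_combination (-1 : ℝ) * hcμ
  · intro h
    rw [Submodule.mem_span_pair] at h
    obtain ⟨a, b, hD⟩ := h
    rw [Submodule.mem_span_singleton]
    refine ⟨(mcOf P - mink P u) * a, ?_⟩
    have hD' : ∀ μ, D μ = a * u μ + b * P μ := by
      intro μ; rw [← hD]; simp
    have h1 : mink D u = -a + b * mink P u := by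
      simp only [mink]
      rw [hD' 0, hD' 1, hD' 2, hD' 3]
      simp only [mink] at huu
      linear_combination a * huu
    have h2 : mink D P = a * mink P u + b * (-(mcOf P ^ 2)) := by
      simp only [mink]
      rw [hD' 0, hD' 1, hD' 2, hD' 3]
      simp only [mink] at hm2
      linear_combination b * hm2
    funext μ
    simp only [Pi.smul_apply, smul_eq_mul, h1, h2]
    rcases eq_or_ne μ 0 with h0 | h0
    · subst h0
      simp only [low, if_pos rfl, ↓reduceIte, hD']
      field_simp
      ring
    · simp only [low, if_neg h0, hD']
      field_simp
      ring
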